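/- (Discrete Strassen's theorem for sub-distributions.) Let μ₁, μ₂ be sub-distributions over countable sets A₁, A₂ and R ⊆ A₁ × A₂ a relation. If there exists a coupling of (μ₁, μ₂) with support in R, then μ₁(S) ≤ μ₂(R(S)) for every S ⊆ A₁, where R(S) = {a₂ : ∃a₁ ∈ S, (a₁,a₂) ∈ R}. The converse holds if μ₁ and μ₂ have equal weight. -/

import Mathlib

open scoped ENNReal Classical

noncomputable section

/-- A discrete sub-distribution: total mass at most 1. -/
def IsSubDist {A : Type*} (μ : A → ℝ≥0∞) : Prop := ∑' a, μ a ≤ 1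

/-- Mass of a set under `μ`. -/
def setSum {A : Type*} (μ : A → ℝ≥0∞) (S : Set A) : ℝ≥0∞ := ∑' a : S, μ (a : A)

/-- `μ` is a coupling of `(μ₁, μ₂)`: a joint sub-distribution with the given marginals. -/
def IsCoupling {A₁ A₂ : Type*} (μ : A₁ × A₂ → ℝ≥0∞)
    (μ₁ : A₁ → ℝ≥0∞) (μ₂ : A₂ → ℝ≥0∞) : Prop :=
  IsSubDist μ ∧ (∀ a₁, ∑' a₂, μ (a₁, a₂) = μ₁ a₁) ∧ (∀ a₂, ∑' a₁, μ (a₁, a₂) = μ₂ a₂)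

/-- Image of a set under a relation. -/
def relImage {A₁ A₂ : Type*} (R : Set (A₁ × A₂)) (S : Set A₁) : Set A₂ :=
  {a₂ | ∃ a₁ ∈ S, (a₁, a₂) ∈ R}

/-- `R⋆ = R ∪ (A₁ × {⋆}) ∪ ({⋆} × A₂)`, with `⋆` modelled by `none`. -/
def starRel {A₁ A₂ : Type*} (R : Set (A₁ × A₂)) : Set (Option A₁ × Option A₂) :=
  {p | match p with
       | (some a₁, some a₂) => (a₁, a₂) ∈ R
       | (some _, none) => True
       | (none, some _) => True
       | (none, none) => False}

/-- `(ε, δ)`-approximate `R`-lifting of `(μ₁, μ₂)`, witnessed by two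
sub-distributions over `A₁⋆ × A₂⋆` with marginal, support, and ε-distance conditions. -/
def ApproxLift {A₁ A₂ : Type*} (ε δ : ℝ) (R : Set (A₁ × A₂))
    (μ₁ : A₁ → ℝ≥0∞) (μ₂ : A₂ → ℝ≥0∞) : Prop :=
  ∃ μL μR : Option A₁ × Option A₂ → ℝ≥0∞,
    IsSubDist μL ∧ IsSubDist μR ∧
    (∀ a₁, ∑' o, μL (some a₁, o) = μ₁ a₁) ∧ (∀ o, μL (none, o) = 0) ∧
    (∀ a₂, ∑' o, μR (o, some a₂) = μ₂ a₂) ∧ (∀ o, μR (o, none) = 0) ∧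
    {p | μL p ≠ 0} ⊆ starRel R ∧ {p | μR p ≠ 0} ⊆ starRel R ∧
    ∀ S : Set (Option A₁ × Option A₂),
      setSum μL S ≤ ENNReal.ofReal (Real.exp ε) * setSum μR S + ENNReal.ofReal δ

namespace StrassenAux
variable {A₁ A₂ : Type*}

/-- image of a finset under relation, within `G`. -/
def rimg (R : Set (A₁ × A₂)) (G : Finset A₂) (S : Finset A₁) : Finset A₂ :=
  G.filter fun b => ∃ a ∈ S, (a, b) ∈ R

lemma rimg_mono (R : Set (A₁ × A₂)) (G : Finset A₂) {S S' : Finset A₁} (h : S ⊆ S') :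
    rimg R G S ⊆ rimg R G S' := by
  intro b hb
  simp only [rimg, Finset.mem_filter] at *
  obtain ⟨hG, a, ha, hr⟩ := hb
  exact ⟨hG, a, h ha, hr⟩

lemma rimg_union (R : Set (A₁ × A₂)) (G : Finset A₂) (S S' : Finset A₁) :
    rimg R G (S ∪ S') = rimg R G S ∪ rimg R G S' := by
  ext b
  simp only [rimg, Finset.mem_filter, Finset.mem_union]
  constructor
  · rintro ⟨hG, a, (h | h), hr⟩
    · exact Or.inl ⟨hG, a, h, hr⟩
    · exact Or.inr ⟨hG, a, h, hr⟩
  · rintro (⟨hG, a, h, hr⟩ | ⟨hG, a, h, hr⟩)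
    · exact ⟨hG, a, Or.inl h, hr⟩
    · exact ⟨hG, a, Or.inr h, hr⟩

def tightExists (R : Set (A₁ × A₂)) (F : Finset A₁) (G : Finset A₂)
    (μ₁ : A₁ → ℝ) (μ₂ : A₂ → ℝ) : Prop :=
  ∃ S : Finset A₁, S ⊆ F ∧ S.Nonempty ∧ S ≠ F ∧
    ∑ a ∈ S, μ₁ a = ∑ b ∈ rimg R G S, μ₂ b

def msr (R : Set (A₁ × A₂)) (F : Finset A₁) (G : Finset A₂)
    (μ₁ : A₁ → ℝ) (μ₂ : A₂ → ℝ) : ℕ :=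
  4 * F.card + (F.filter fun a => μ₁ a ≠ 0).card + (G.filter fun b => μ₂ b ≠ 0).card +
    (if tightExists R F G μ₁ μ₂ then 0 else 1)

theorem finStrassen (R : Set (A₁ × A₂)) :
    ∀ (n : ℕ) (F : Finset A₁) (G : Finset A₂) (μ₁ : A₁ → ℝ) (μ₂ : A₂ → ℝ),
    (∀ a, 0 ≤ μ₁ a) → (∀ b, 0 ≤ μ₂ b) →
    (∀ a, a ∉ F → μ₁ a = 0) → (∀ b, b ∉ G → μ₂ b = 0) →
    (∑ a ∈ F, μ₁ a = ∑ b ∈ G, μ₂ b) →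
    (∀ S ⊆ F, ∑ a ∈ S, μ₁ a ≤ ∑ b ∈ rimg R G S, μ₂ b) →
    msr R F G μ₁ μ₂ ≤ n →
    ∃ μ : A₁ × A₂ → ℝ, (∀ p, 0 ≤ μ p) ∧
      (∀ p, μ p ≠ 0 → p ∈ R ∧ p.1 ∈ F ∧ p.2 ∈ G) ∧
      (∀ a, ∑ b ∈ G, μ (a, b) = μ₁ a) ∧ (∀ b, ∑ a ∈ F, μ (a, b) = μ₂ b) := by
  intro n
  induction n with
  | zero =>
    intro F G μ₁ μ₂ _ _ _ _ _ _ hm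
    exfalso
    by_cases h : tightExists R F G μ₁ μ₂
    · obtain ⟨S, hSF, hSne, _, _⟩ := h
      have hc : 1 ≤ F.card := Finset.card_pos.2 ⟨hSne.choose, hSF hSne.choose_spec⟩
      rw [msr] at hm
      omega
    · rw [msr, if_neg h] at hm
      omega
  | succ n ih =>
    intro F G μ₁ μ₂ h10 h20 hs1 hs2 hw hst hm
    by_cases hW : ∑ a ∈ F, μ₁ a = 0
    · -- everything is zero
      have hz1 : ∀ a, μ₁ a = 0 := by
        intro a
        by_cases haF : a ∈ F
        · exact (Finset.sum_eq_zero_iff_of_nonneg (fun i _ => h10 i)).1 hW a haF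
        · exact hs1 a haF
      have hz2 : ∀ b, μ₂ b = 0 := by
        intro b
        by_cases hbG : b ∈ G
        · exact (Finset.sum_eq_zero_iff_of_nonneg (fun i _ => h20 i)).1 (hw.symm.trans hW) b hbG
        · exact hs2 b hbG
      exact ⟨0, fun p => le_refl 0, fun p hp => absurd rfl hp,
        fun a => by simp [hz1 a], fun b => by simp [hz2 b]⟩
    by_cases htight : tightExists R F G μ₁ μ₂
    · -- split along a tight set S
      obtain ⟨S, hSF, hSne, hSneF, htt⟩ := htight
      have hti : tightExists R F G μ₁ μ₂ := ⟨S, hSF, hSne, hSneF, htt⟩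
      set T := rimg R G S with hTdef
      have hTG : T ⊆ G := Finset.filter_subset _ _
      set ν₁ : A₁ → ℝ := fun a => if a ∈ S then μ₁ a else 0 with hν₁
      set ν₂ : A₂ → ℝ := fun b => if b ∈ T then μ₂ b else 0 with hν₂
      set ν₁' : A₁ → ℝ := fun a => if a ∈ F \ S then μ₁ a else 0 with hν₁'
      set ν₂' : A₂ → ℝ := fun b => if b ∈ G \ T then μ₂ b else 0 with hν₂'
      -- restricted sums agree
      have hr1 : ∀ X ⊆ S, ∑ a ∈ X, ν₁ a = ∑ a ∈ X, μ₁ a :=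
        fun X hX => Finset.sum_congr rfl (fun a ha => if_pos (hX ha))
      have hr2 : ∀ Y ⊆ T, ∑ b ∈ Y, ν₂ b = ∑ b ∈ Y, μ₂ b :=
        fun Y hY => Finset.sum_congr rfl (fun b hb => if_pos (hY hb))
      have hr1' : ∀ X ⊆ F \ S, ∑ a ∈ X, ν₁' a = ∑ a ∈ X, μ₁ a :=
        fun X hX => Finset.sum_congr rfl (fun a ha => if_pos (hX ha))
      have hr2' : ∀ Y ⊆ G \ T, ∑ b ∈ Y, ν₂' b = ∑ b ∈ Y, μ₂ b :=
        fun Y hY => Finset.sum_congr rfl (fun b hb => if_pos (hY hb))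
      -- rimg within T agrees with rimg within G for S' ⊆ S
      have hT1 : ∀ S' ⊆ S, rimg R T S' = rimg R G S' := by
        intro S' hS'
        ext b
        simp only [rimg, Finset.mem_filter]
        constructor
        · rintro ⟨hbT, hb⟩
          exact ⟨hTG hbT, hb⟩
        · rintro ⟨hbG, a, ha, hr⟩
          exact ⟨Finset.mem_filter.2 ⟨hbG, a, hS' ha, hr⟩, a, ha, hr⟩
      have hT2 : ∀ S' : Finset A₁, rimg R (G \ T) S' = rimg R G S' \ T := by
        intro S'
        ext b
        simp only [rimg, Finset.mem_filter, Finset.mem_sdiff]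
        tauto
      -- first subproblem
      obtain ⟨μa, hμa0, hμasupp, hμarow, hμacol⟩ :=
        ih S T ν₁ ν₂
          (fun a => by
            show (0:ℝ) ≤ if a ∈ S then μ₁ a else 0
            split_ifs; exacts [h10 a, le_rfl])
          (fun b => by
            show (0:ℝ) ≤ if b ∈ T then μ₂ b else 0
            split_ifs; exacts [h20 b, le_rfl])
          (fun a ha => if_neg ha) (fun b hb => if_neg hb)
          (by rw [hr1 S Finset.Subset.rfl, hr2 T Finset.Subset.rfl]; exact htt)
          (by
            intro S' hS'
            have himg : rimg R G S' ⊆ T := by rw [hTdef]; exact rimg_mono R G hS'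
            rw [hr1 S' hS', hT1 S' hS', hr2 _ himg]
            exact hst S' (hS'.trans hSF))
          (by
            have hmsr := hm
            rw [msr, if_pos hti] at hmsr
            have hcS : S.card < F.card :=
              Finset.card_lt_card (ssubset_of_subset_of_ne hSF hSneF)
            have hb1 : (S.filter fun a => ν₁ a ≠ 0).card ≤ (F.filter fun a => μ₁ a ≠ 0).card := by
              apply Finset.card_le_card
              intro a ha
              rw [Finset.mem_filter] at ha ⊢
              have hv : ν₁ a = μ₁ a := if_pos ha.1
              exact ⟨hSF ha.1, hv ▸ ha.2⟩
            have hb2 : (T.filter fun b => ν₂ b ≠ 0).card ≤ (G.filter fun b => μ₂ b ≠ 0).card := by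
              apply Finset.card_le_card
              intro b hb
              rw [Finset.mem_filter] at hb ⊢
              have hv : ν₂ b = μ₂ b := if_pos hb.1
              exact ⟨hTG hb.1, hv ▸ hb.2⟩
            rw [msr]
            split_ifs <;> omega)
      -- second subproblem
      obtain ⟨μb, hμb0, hμbsupp, hμbrow, hμbcol⟩ :=
        ih (F \ S) (G \ T) ν₁' ν₂'
          (fun a => by
            show (0:ℝ) ≤ if a ∈ F \ S then μ₁ a else 0
            split_ifs; exacts [h10 a, le_rfl])
          (fun b => by
            show (0:ℝ) ≤ if b ∈ G \ T then μ₂ b else 0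
            split_ifs; exacts [h20 b, le_rfl])
          (fun a ha => if_neg ha) (fun b hb => if_neg hb)
          (by
            rw [hr1' _ Finset.Subset.rfl, hr2' _ Finset.Subset.rfl]
            have e1 := Finset.sum_sdiff_eq_sub (f := μ₁) hSF
            have e2 := Finset.sum_sdiff_eq_sub (f := μ₂) hTG
            rw [e1, e2, hw, htt])
          (by
            intro S' hS'
            have hsub : rimg R G S' \ T ⊆ G \ T := by
              intro b hb
              have := Finset.mem_sdiff.1 hb
              exact Finset.mem_sdiff.2 ⟨Finset.filter_subset _ _ this.1, this.2⟩
            rw [hr1' S' hS', hT2 S', hr2' _ hsub]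
            -- main inequality
            have hkey := hst (S ∪ S') (Finset.union_subset hSF (hS'.trans Finset.sdiff_subset))
            rw [rimg_union] at hkey
            have hdisj : Disjoint S S' := by
              refine Finset.disjoint_left.2 (fun a ha ha' => ?_)
              exact (Finset.mem_sdiff.1 (hS' ha')).2 ha
            rw [Finset.sum_union hdisj] at hkey
            have hsplit : ∑ b ∈ T ∪ rimg R G S', μ₂ b
                = ∑ b ∈ T, μ₂ b + ∑ b ∈ rimg R G S' \ T, μ₂ b := by
              rw [← Finset.sum_union Finset.disjoint_sdiff, Finset.union_sdiff_self_eq_union]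
            rw [hsplit] at hkey
            linarith [hkey, htt])
          (by
            have hmsr := hm
            rw [msr, if_pos hti] at hmsr
            have hcS : (F \ S).card < F.card :=
              Finset.card_lt_card (Finset.sdiff_ssubset hSF hSne)
            have hb1 : ((F \ S).filter fun a => ν₁' a ≠ 0).card
                ≤ (F.filter fun a => μ₁ a ≠ 0).card := by
              apply Finset.card_le_card
              intro a ha
              rw [Finset.mem_filter] at ha ⊢
              have hv : ν₁' a = μ₁ a := if_pos ha.1
              exact ⟨(Finset.mem_sdiff.1 ha.1).1, hv ▸ ha.2⟩
            have hb2 : ((G \ T).filter fun b => ν₂' b ≠ 0).card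
                ≤ (G.filter fun b => μ₂ b ≠ 0).card := by
              apply Finset.card_le_card
              intro b hb
              rw [Finset.mem_filter] at hb ⊢
              have hv : ν₂' b = μ₂ b := if_pos hb.1
              exact ⟨(Finset.mem_sdiff.1 hb.1).1, hv ▸ hb.2⟩
            rw [msr]
            split_ifs <;> omega)
      -- combine
      refine ⟨fun p => μa p + μb p, fun p => add_nonneg (hμa0 p) (hμb0 p), ?_, ?_, ?_⟩
      · intro p hp
        have : μa p ≠ 0 ∨ μb p ≠ 0 := by
          by_contra h
          push_neg at h
          exact hp (by simp [h.1, h.2])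
        rcases this with h | h
        · obtain ⟨h1, h2, h3⟩ := hμasupp p h
          exact ⟨h1, hSF h2, hTG h3⟩
        · obtain ⟨h1, h2, h3⟩ := hμbsupp p h
          exact ⟨h1, Finset.sdiff_subset h2, Finset.sdiff_subset h3⟩
      · intro a
        rw [Finset.sum_add_distrib]
        have e1 : ∑ b ∈ G, μa (a, b) = ∑ b ∈ T, μa (a, b) := by
          refine (Finset.sum_subset hTG (fun b hb hbT => ?_)).symm
          by_contra h
          exact hbT (hμasupp (a, b) h).2.2
        have e2 : ∑ b ∈ G, μb (a, b) = ∑ b ∈ G \ T, μb (a, b) := by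
          refine (Finset.sum_subset Finset.sdiff_subset (fun b hb hbT => ?_)).symm
          by_contra h
          exact hbT (hμbsupp (a, b) h).2.2
        rw [e1, e2, hμarow a, hμbrow a]
        by_cases haS : a ∈ S
        · have : a ∉ F \ S := fun h => (Finset.mem_sdiff.1 h).2 haS
          simp [hν₁, hν₁', haS, this]
        · by_cases haF : a ∈ F
          · have : a ∈ F \ S := Finset.mem_sdiff.2 ⟨haF, haS⟩
            simp only [hν₁, hν₁', if_neg haS, if_pos this, zero_add]
          · have : a ∉ F \ S := fun h => haF (Finset.mem_sdiff.1 h).1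
            simp only [hν₁, hν₁', if_neg haS, if_neg this, hs1 a haF, add_zero]
      · intro b
        rw [Finset.sum_add_distrib]
        have e1 : ∑ a ∈ F, μa (a, b) = ∑ a ∈ S, μa (a, b) := by
          refine (Finset.sum_subset hSF (fun a ha haS => ?_)).symm
          by_contra h
          exact haS (hμasupp (a, b) h).2.1
        have e2 : ∑ a ∈ F, μb (a, b) = ∑ a ∈ F \ S, μb (a, b) := by
          refine (Finset.sum_subset Finset.sdiff_subset (fun a ha haS => ?_)).symm
          by_contra h
          exact haS (hμbsupp (a, b) h).2.1
        rw [e1, e2, hμacol b, hμbcol b]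
        by_cases hbT : b ∈ T
        · have : b ∉ G \ T := fun h => (Finset.mem_sdiff.1 h).2 hbT
          simp [hν₂, hν₂', hbT, this]
        · by_cases hbG : b ∈ G
          · have : b ∈ G \ T := Finset.mem_sdiff.2 ⟨hbG, hbT⟩
            simp only [hν₂, hν₂', if_neg hbT, if_pos this, zero_add]
          · have : b ∉ G \ T := fun h => hbG (Finset.mem_sdiff.1 h).1
            simp only [hν₂, hν₂', if_neg hbT, if_neg this, hs2 b hbG, add_zero]
    · -- transfer case
      have hWpos : 0 < ∑ a ∈ F, μ₁ a :=
        lt_of_le_of_ne (Finset.sum_nonneg fun i _ => h10 i) (Ne.symm hW)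
      obtain ⟨a₁, ha₁F, ha₁pos⟩ : ∃ a ∈ F, 0 < μ₁ a := by
        by_contra h
        push_neg at h
        have : ∑ a ∈ F, μ₁ a ≤ 0 := Finset.sum_nonpos (fun i hi => h i hi)
        linarith
      have h1 : μ₁ a₁ ≤ ∑ b ∈ rimg R G {a₁}, μ₂ b := by
        have := hst {a₁} (Finset.singleton_subset_iff.2 ha₁F)
        rwa [Finset.sum_singleton] at this
      obtain ⟨a₂, ha₂img, ha₂pos⟩ : ∃ b ∈ rimg R G {a₁}, 0 < μ₂ b := by
        by_contra h
        push_neg at h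
        have : ∑ b ∈ rimg R G {a₁}, μ₂ b ≤ 0 := Finset.sum_nonpos h
        linarith
      have ha₂G : a₂ ∈ G := Finset.filter_subset _ _ ha₂img
      have hR12 : (a₁, a₂) ∈ R := by
        obtain ⟨a, ha, hr⟩ := (Finset.mem_filter.1 ha₂img).2
        rwa [Finset.mem_singleton.1 ha] at hr
      set 𝒮 : Finset (Finset A₁) :=
        F.powerset.filter (fun S => S.Nonempty ∧ S ≠ F ∧ a₁ ∉ S ∧ a₂ ∈ rimg R G S) with h𝒮
      set slk : Finset A₁ → ℝ := fun S => ∑ b ∈ rimg R G S, μ₂ b - ∑ a ∈ S, μ₁ a with hslk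
      have hslkpos : ∀ S ∈ 𝒮, 0 < slk S := by
        intro S hS
        rw [h𝒮, Finset.mem_filter, Finset.mem_powerset] at hS
        obtain ⟨hSF, hSne, hSneF, _, _⟩ := hS
        rcases lt_or_eq_of_le (hst S hSF) with h | h
        · rw [hslk]; dsimp only; linarith
        · exact absurd ⟨S, hSF, hSne, hSneF, h⟩ htight
      set s : ℝ := if h : 𝒮.Nonempty then 𝒮.inf' h slk else μ₁ a₁ with hs
      have hspos : 0 < s := by
        rw [hs]; split_ifs with h
        · obtain ⟨S, hS, hSe⟩ := Finset.exists_mem_eq_inf' h slk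
          rw [hSe]; exact hslkpos S hS
        · exact ha₁pos
      set t : ℝ := min (μ₁ a₁) (min (μ₂ a₂) s) with ht
      have htpos : 0 < t := lt_min ha₁pos (lt_min ha₂pos hspos)
      have ht1 : t ≤ μ₁ a₁ := min_le_left _ _
      have ht2 : t ≤ μ₂ a₂ := (min_le_right _ _).trans (min_le_left _ _)
      have hts : ∀ S ∈ 𝒮, t ≤ slk S := by
        intro S hS
        have h𝒮ne : 𝒮.Nonempty := ⟨S, hS⟩
        have hh : t ≤ s := (min_le_right _ _).trans (min_le_right _ _)
        rw [hs, dif_pos h𝒮ne] at hh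
        exact hh.trans (Finset.inf'_le slk hS)
      set μ₁' : A₁ → ℝ := fun a => μ₁ a - (if a = a₁ then t else 0) with hμ₁'
      set μ₂' : A₂ → ℝ := fun b => μ₂ b - (if b = a₂ then t else 0) with hμ₂'
      have hsum1 : ∀ X : Finset A₁,
          ∑ a ∈ X, μ₁' a = ∑ a ∈ X, μ₁ a - (if a₁ ∈ X then t else 0) := by
        intro X
        rw [hμ₁', Finset.sum_sub_distrib, Finset.sum_ite_eq' X a₁ (fun _ => t)]
      have hsum2 : ∀ Y : Finset A₂,
          ∑ b ∈ Y, μ₂' b = ∑ b ∈ Y, μ₂ b - (if a₂ ∈ Y then t else 0) := by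
        intro Y
        rw [hμ₂', Finset.sum_sub_distrib, Finset.sum_ite_eq' Y a₂ (fun _ => t)]
      obtain ⟨μ', h0', hsupp', hrow', hcol'⟩ := ih F G μ₁' μ₂'
        (fun a => by
          show (0:ℝ) ≤ μ₁ a - (if a = a₁ then t else 0)
          split_ifs with h
          · subst h; linarith
          · simpa using h10 a)
        (fun b => by
          show (0:ℝ) ≤ μ₂ b - (if b = a₂ then t else 0)
          split_ifs with h
          · subst h; linarith
          · simpa using h20 b)
        (fun a ha => by
          show μ₁ a - (if a = a₁ then t else 0) = 0
          rw [if_neg (fun h => ha (by rw [h]; exact ha₁F)), hs1 a ha, sub_zero])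
        (fun b hb => by
          show μ₂ b - (if b = a₂ then t else 0) = 0
          rw [if_neg (fun h => hb (by rw [h]; exact ha₂G)), hs2 b hb, sub_zero])
        (by rw [hsum1 F, hsum2 G, if_pos ha₁F, if_pos ha₂G, hw])
        (by
          intro S hS
          rw [hsum1 S, hsum2 (rimg R G S)]
          by_cases hc1 : a₁ ∈ S
          · have hc2 : a₂ ∈ rimg R G S := Finset.mem_filter.2 ⟨ha₂G, a₁, hc1, hR12⟩
            rw [if_pos hc1, if_pos hc2]
            linarith [hst S hS]
          · rw [if_neg hc1]
            by_cases hc2 : a₂ ∈ rimg R G S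
            · rw [if_pos hc2]
              have hSne : S.Nonempty := by
                obtain ⟨a, ha, _⟩ := (Finset.mem_filter.1 hc2).2
                exact ⟨a, ha⟩
              have hS𝒮 : S ∈ 𝒮 := by
                rw [h𝒮, Finset.mem_filter, Finset.mem_powerset]
                exact ⟨hS, hSne, fun h => hc1 (h ▸ ha₁F), hc1, hc2⟩
              have := hts S hS𝒮
              rw [hslk] at this
              dsimp only at this
              linarith
            · rw [if_neg hc2]
              linarith [hst S hS])
        (by
          have hmsr := hm
          rw [msr, if_neg htight] at hmsr
          have hb1 : (F.filter fun a => μ₁' a ≠ 0) ⊆ (F.filter fun a => μ₁ a ≠ 0) := by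
            intro a ha
            rw [Finset.mem_filter] at ha ⊢
            refine ⟨ha.1, ?_⟩
            by_cases h : a = a₁
            · subst h; exact ne_of_gt ha₁pos
            · have hv : μ₁' a = μ₁ a := by
                show μ₁ a - (if a = a₁ then t else 0) = μ₁ a
                rw [if_neg h, sub_zero]
              exact hv ▸ ha.2
          have hb2 : (G.filter fun b => μ₂' b ≠ 0) ⊆ (G.filter fun b => μ₂ b ≠ 0) := by
            intro b hb
            rw [Finset.mem_filter] at hb ⊢
            refine ⟨hb.1, ?_⟩
            by_cases h : b = a₂
            · subst h; exact ne_of_gt ha₂pos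
            · have hv : μ₂' b = μ₂ b := by
                show μ₂ b - (if b = a₂ then t else 0) = μ₂ b
                rw [if_neg h, sub_zero]
              exact hv ▸ hb.2
          have hcase : t = μ₁ a₁ ∨ t = μ₂ a₂ ∨ ∃ S ∈ 𝒮, slk S = t := by
            rcases min_cases (μ₁ a₁) (min (μ₂ a₂) s) with ⟨h, _⟩ | ⟨h, _⟩
            · exact Or.inl (ht ▸ h)
            · rcases min_cases (μ₂ a₂) s with ⟨h2, _⟩ | ⟨h2, _⟩
              · exact Or.inr (Or.inl (by rw [ht, h, h2]))
              · by_cases hne : 𝒮.Nonempty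
                · obtain ⟨S, hS, hSe⟩ := Finset.exists_mem_eq_inf' hne slk
                  exact Or.inr (Or.inr ⟨S, hS, by rw [ht, h, h2, hs, dif_pos hne, hSe]⟩)
                · exact Or.inl (by rw [ht, h, h2, hs, dif_neg hne])
          rcases hcase with hc | hc | ⟨S, hS𝒮, hSe⟩
          · have hstrict : (F.filter fun a => μ₁' a ≠ 0).card
                < (F.filter fun a => μ₁ a ≠ 0).card := by
              apply Finset.card_lt_card
              refine ⟨hb1, fun hsup => ?_⟩
              have ha₁mem : a₁ ∈ F.filter fun a => μ₁ a ≠ 0 :=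
                Finset.mem_filter.2 ⟨ha₁F, ne_of_gt ha₁pos⟩
              have hmem := hsup ha₁mem
              rw [Finset.mem_filter] at hmem
              apply hmem.2
              show μ₁ a₁ - (if a₁ = a₁ then t else 0) = 0
              rw [if_pos rfl, hc, sub_self]
            have hc2card := Finset.card_le_card hb2
            rw [msr]
            split_ifs <;> omega
          · have hstrict : (G.filter fun b => μ₂' b ≠ 0).card
                < (G.filter fun b => μ₂ b ≠ 0).card := by
              apply Finset.card_lt_card
              refine ⟨hb2, fun hsup => ?_⟩
              have ha₂mem : a₂ ∈ G.filter fun b => μ₂ b ≠ 0 :=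
                Finset.mem_filter.2 ⟨ha₂G, ne_of_gt ha₂pos⟩
              have hmem := hsup ha₂mem
              rw [Finset.mem_filter] at hmem
              apply hmem.2
              show μ₂ a₂ - (if a₂ = a₂ then t else 0) = 0
              rw [if_pos rfl, hc, sub_self]
            have hc1card := Finset.card_le_card hb1
            rw [msr]
            split_ifs <;> omega
          · have htight' : tightExists R F G μ₁' μ₂' := by
              rw [h𝒮, Finset.mem_filter, Finset.mem_powerset] at hS𝒮
              obtain ⟨hSF, hSne, hSneF, ha₁S, ha₂S⟩ := hS𝒮
              refine ⟨S, hSF, hSne, hSneF, ?_⟩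
              rw [hsum1 S, hsum2 (rimg R G S), if_neg ha₁S, if_pos ha₂S]
              rw [hslk] at hSe
              dsimp only at hSe
              linarith
            have hc1card := Finset.card_le_card hb1
            have hc2card := Finset.card_le_card hb2
            rw [msr, if_pos htight']
            omega)
      refine ⟨fun p => μ' p + (if p = (a₁, a₂) then t else 0), ?_, ?_, ?_, ?_⟩
      · intro p
        have hnn : (0:ℝ) ≤ if p = (a₁, a₂) then t else 0 := by
          split_ifs
          exacts [le_of_lt htpos, le_rfl]
        exact add_nonneg (h0' p) hnn
      · intro p hp
        by_cases hpe : p = (a₁, a₂)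
        · subst hpe; exact ⟨hR12, ha₁F, ha₂G⟩
        · have hne : μ' p ≠ 0 := by
            intro h
            apply hp
            simp [h, hpe]
          obtain ⟨u, v, w⟩ := hsupp' p hne
          exact ⟨u, v, w⟩
      · intro a
        rw [Finset.sum_add_distrib, hrow' a]
        by_cases h : a = a₁
        · have e : ∀ b, (if ((a:A₁), b) = (a₁, a₂) then t else 0)
              = (if b = a₂ then t else 0) := by
            intro b
            by_cases hb : b = a₂
            · rw [if_pos hb, if_pos (by rw [h, hb])]
            · rw [if_neg hb, if_neg (by simp [Prod.ext_iff, hb])]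
          rw [Finset.sum_congr rfl (fun b _ => e b),
            Finset.sum_ite_eq' G a₂ (fun _ => t), if_pos ha₂G]
          show μ₁ a - (if a = a₁ then t else 0) + t = μ₁ a
          rw [if_pos h]
          ring
        · have e : ∀ b ∈ G, (if ((a:A₁), b) = (a₁, a₂) then t else 0) = 0 :=
            fun b _ => if_neg (by simp [Prod.ext_iff, h])
          rw [Finset.sum_eq_zero e, add_zero]
          show μ₁ a - (if a = a₁ then t else 0) = μ₁ a
          rw [if_neg h, sub_zero]
      · intro b
        rw [Finset.sum_add_distrib, hcol' b]
        by_cases h : b = a₂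
        · have e : ∀ a, (if ((a:A₁), b) = (a₁, a₂) then t else 0)
              = (if a = a₁ then t else 0) := by
            intro a
            by_cases hb : a = a₁
            · rw [if_pos hb, if_pos (by rw [h, hb])]
            · rw [if_neg hb, if_neg (by simp [Prod.ext_iff, hb])]
          rw [Finset.sum_congr rfl (fun a _ => e a),
            Finset.sum_ite_eq' F a₁ (fun _ => t), if_pos ha₁F]
          show μ₂ b - (if b = a₂ then t else 0) + t = μ₂ b
          rw [if_pos h]
          ring
        · have e : ∀ a ∈ F, (if ((a:A₁), b) = (a₁, a₂) then t else 0) = 0 :=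
            fun a _ => if_neg (by simp [Prod.ext_iff, h])
          rw [Finset.sum_eq_zero e, add_zero]
          show μ₂ b - (if b = a₂ then t else 0) = μ₂ b
          rw [if_neg h, sub_zero]

lemma setSum_mono {A : Type*} (μ : A → ℝ≥0∞) {S T : Set A} (h : S ⊆ T) :
    setSum μ S ≤ setSum μ T := by
  rw [setSum, setSum, tsum_subtype, tsum_subtype]
  exact ENNReal.tsum_le_tsum
    (fun a => Set.indicator_le_indicator_of_subset h (fun _ => zero_le) a)

lemma setSum_union_le {A : Type*} (μ : A → ℝ≥0∞) (S T : Set A) :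
    setSum μ (S ∪ T) ≤ setSum μ S + setSum μ T := by
  rw [setSum, setSum, setSum, tsum_subtype, tsum_subtype, tsum_subtype, ← ENNReal.tsum_add]
  refine ENNReal.tsum_le_tsum (fun a => ?_)
  by_cases h : a ∈ S ∪ T
  · rw [Set.indicator_of_mem h]
    rcases h with h | h
    · rw [Set.indicator_of_mem h]; exact le_self_add
    · rw [Set.indicator_of_mem h]; exact le_add_self
  · rw [Set.indicator_of_notMem h]; exact zero_le

lemma setSum_finset {A : Type*} (μ : A → ℝ≥0∞) (F : Finset A) :
    setSum μ ↑F = ∑ a ∈ F, μ a := by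
  rw [setSum]
  exact Finset.tsum_subtype F μ

lemma split_tail {A : Type*} (μ : A → ℝ≥0∞) (F : Finset A) :
    ∑ a ∈ F, μ a + setSum μ (↑F)ᶜ = ∑' a, μ a := by
  rw [← setSum_finset, setSum, setSum]
  exact Summable.tsum_add_tsum_compl ENNReal.summable ENNReal.summable

lemma sum_union_le_real {α : Type*} (X Y : Finset α) (f : α → ℝ) (h : ∀ x, 0 ≤ f x) :
    ∑ x ∈ X ∪ Y, f x ≤ ∑ x ∈ X, f x + ∑ x ∈ Y, f x := by
  calc ∑ x ∈ X ∪ Y, f x = ∑ x ∈ X, f x + ∑ x ∈ Y \ X, f x := by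
        rw [← Finset.sum_union Finset.disjoint_sdiff, Finset.union_sdiff_self_eq_union]
    _ ≤ ∑ x ∈ X, f x + ∑ x ∈ Y, f x := add_le_add le_rfl
        (Finset.sum_le_sum_of_subset_of_nonneg Finset.sdiff_subset (fun i _ _ => h i))

lemma sum_le_three {α : Type*} (Z E X Y : Finset α) (f : α → ℝ) (h0 : ∀ x, 0 ≤ f x)
    (hc : ∀ z ∈ Z, z ∈ E ∨ z ∈ X ∨ z ∈ Y) :
    ∑ z ∈ Z, f z ≤ ∑ z ∈ E, f z + ∑ z ∈ X, f z + ∑ z ∈ Y, f z := by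
  classical
  have h1 : Z ⊆ E ∪ X ∪ Y := by
    intro z hz
    rcases hc z hz with h | h | h
    · exact Finset.mem_union_left _ (Finset.mem_union_left _ h)
    · exact Finset.mem_union_left _ (Finset.mem_union_right _ h)
    · exact Finset.mem_union_right _ h
  calc ∑ z ∈ Z, f z ≤ ∑ z ∈ E ∪ X ∪ Y, f z :=
        Finset.sum_le_sum_of_subset_of_nonneg h1 (fun i _ _ => h0 i)
    _ ≤ ∑ z ∈ E ∪ X, f z + ∑ z ∈ Y, f z := sum_union_le_real _ _ _ h0
    _ ≤ (∑ z ∈ E, f z + ∑ z ∈ X, f z) + ∑ z ∈ Y, f z :=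
        add_le_add (sum_union_le_real _ _ _ h0) le_rfl

lemma approx_coupling (μ₁ : A₁ → ℝ≥0∞) (μ₂ : A₂ → ℝ≥0∞) (R : Set (A₁ × A₂))
    (h₁ : ∑' a, μ₁ a ≤ 1) (hw : ∑' a, μ₁ a = ∑' b, μ₂ b)
    (hst : ∀ S : Set A₁, setSum μ₁ S ≤ setSum μ₂ (relImage R S))
    (F : Finset A₁) (G : Finset A₂) :
    ∃ ν : A₁ × A₂ → ℝ≥0∞, (∀ p, p ∉ R → ν p = 0) ∧
      (∀ a, ∑' b, ν (a, b) ≤ μ₁ a) ∧ (∀ b, ∑' a, ν (a, b) ≤ μ₂ b) ∧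
      ∑' a, μ₁ a ≤ ∑ p ∈ F ×ˢ G, ν p + setSum μ₁ (↑F)ᶜ + setSum μ₂ (↑G)ᶜ := by
  classical
  set W := ∑' a, μ₁ a with hW
  have hWtop : W ≠ ⊤ := ne_top_of_le_ne_top ENNReal.one_ne_top h₁
  have hμ₁top : ∀ a, μ₁ a ≠ ⊤ :=
    fun a => ne_top_of_le_ne_top hWtop (ENNReal.le_tsum a)
  have hW2top : (∑' b, μ₂ b) ≠ ⊤ := by rw [← hw]; exact hWtop
  have hμ₂top : ∀ b, μ₂ b ≠ ⊤ :=
    fun b => ne_top_of_le_ne_top hW2top (ENNReal.le_tsum b)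
  set tF := setSum μ₁ (↑F)ᶜ with htF
  set tG := setSum μ₂ (↑G)ᶜ with htG
  have hsplitF : ∑ a ∈ F, μ₁ a + tF = W := split_tail μ₁ F
  have hsplitG : ∑ b ∈ G, μ₂ b + tG = W := by rw [htG, split_tail μ₂ G, ← hw]
  have htFtop : tF ≠ ⊤ := by
    intro h
    rw [h, add_top] at hsplitF
    exact hWtop hsplitF.symm
  have htGtop : tG ≠ ⊤ := by
    intro h
    rw [h, add_top] at hsplitG
    exact hWtop hsplitG.symm
  have hsumFtop : ∀ (X : Finset A₁), (∑ a ∈ X, μ₁ a) ≠ ⊤ :=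
    fun X => (ENNReal.sum_lt_top.2 (fun a _ => lt_top_iff_ne_top.2 (hμ₁top a))).ne
  have hsumGtop : ∀ (Y : Finset A₂), (∑ b ∈ Y, μ₂ b) ≠ ⊤ :=
    fun Y => (ENNReal.sum_lt_top.2 (fun b _ => lt_top_iff_ne_top.2 (hμ₂top b))).ne
  -- the finite real problem on Option types
  set f₁ : Option A₁ → ℝ := fun o => Option.rec tF.toReal
    (fun a => if a ∈ F then (μ₁ a).toReal else 0) o with hf₁
  set f₂ : Option A₂ → ℝ := fun o => Option.rec tG.toReal
    (fun b => if b ∈ G then (μ₂ b).toReal else 0) o with hf₂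
  set F' : Finset (Option A₁) := insert none (F.image some) with hF'
  set G' : Finset (Option A₂) := insert none (G.image some) with hG'
  set R' : Set (Option A₁ × Option A₂) :=
    {p | ∀ a b, p = (some a, some b) → (a, b) ∈ R} with hR'
  have hnoneF : (none : Option A₁) ∉ F.image some := by simp
  have hnoneG : (none : Option A₂) ∉ G.image some := by simp
  have hsumF' : ∑ o ∈ F', f₁ o = W.toReal := by
    rw [hF', Finset.sum_insert hnoneF, Finset.sum_image (by simp)]
    have : ∑ a ∈ F, f₁ (some a) = ∑ a ∈ F, (μ₁ a).toReal :=
      Finset.sum_congr rfl (fun a ha => by simp [hf₁, ha])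
    rw [this, ← ENNReal.toReal_sum (fun a _ => hμ₁top a)]
    show tF.toReal + (∑ a ∈ F, μ₁ a).toReal = W.toReal
    rw [← ENNReal.toReal_add htFtop (hsumFtop F), add_comm, hsplitF]
  have hsumG' : ∑ o ∈ G', f₂ o = W.toReal := by
    rw [hG', Finset.sum_insert hnoneG, Finset.sum_image (by simp)]
    have : ∑ b ∈ G, f₂ (some b) = ∑ b ∈ G, (μ₂ b).toReal :=
      Finset.sum_congr rfl (fun b hb => by simp [hf₂, hb])
    rw [this, ← ENNReal.toReal_sum (fun b _ => hμ₂top b)]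
    show tG.toReal + (∑ b ∈ G, μ₂ b).toReal = W.toReal
    rw [← ENNReal.toReal_add htGtop (hsumGtop G), add_comm, hsplitG]
  have hf₁0 : ∀ o, 0 ≤ f₁ o := by
    intro o
    match o with
    | none => exact ENNReal.toReal_nonneg
    | some a =>
      show (0:ℝ) ≤ if a ∈ F then _ else _
      split_ifs <;> simp [ENNReal.toReal_nonneg]
  have hf₂0 : ∀ o, 0 ≤ f₂ o := by
    intro o
    match o with
    | none => exact ENNReal.toReal_nonneg
    | some b =>
      show (0:ℝ) ≤ if b ∈ G then _ else _
      split_ifs <;> simp [ENNReal.toReal_nonneg]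
  obtain ⟨μ', h0', hsupp', hrow', hcol'⟩ := finStrassen R' (msr R' F' G' f₁ f₂) F' G' f₁ f₂
    hf₁0 hf₂0
    (by
      intro o ho
      match o with
      | none => exact absurd (Finset.mem_insert_self _ _) ho
      | some a =>
        have : a ∉ F := fun h => ho (by
          rw [hF']
          exact Finset.mem_insert_of_mem (Finset.mem_image_of_mem some h))
        show (if a ∈ F then _ else 0) = 0
        rw [if_neg this])
    (by
      intro o ho
      match o with
      | none => exact absurd (Finset.mem_insert_self _ _) ho
      | some b =>
        have : b ∉ G := fun h => ho (by
          rw [hG']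
          exact Finset.mem_insert_of_mem (Finset.mem_image_of_mem some h))
        show (if b ∈ G then _ else 0) = 0
        rw [if_neg this])
    (by rw [hsumF', hsumG'])
    (by
      intro S hS
      by_cases hnS : none ∈ S
      · have himgG : rimg R' G' S = G' := by
          apply Finset.Subset.antisymm (Finset.filter_subset _ _)
          intro b hb
          exact Finset.mem_filter.2 ⟨hb, none, hnS, by rw [hR']; rintro a c ⟨⟩⟩
        rw [himgG, hsumG', ← hsumF']
        exact Finset.sum_le_sum_of_subset_of_nonneg hS (fun o _ _ => hf₁0 o)
      · -- S consists of `some` elements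
        set S₀ : Finset A₁ := F.filter (fun a => some a ∈ S) with hS₀
        have hSeq : S = S₀.image some := by
          ext o
          match o with
          | none => simp [hnS]
          | some a =>
            simp only [Finset.mem_image, hS₀, Finset.mem_filter]
            constructor
            · intro h
              have haF' : some a ∈ F' := hS h
              rw [hF', Finset.mem_insert] at haF'
              rcases haF' with h' | h'
              · exact absurd h' (by simp)
              · obtain ⟨a', ha', he⟩ := Finset.mem_image.1 h'
                exact ⟨a, ⟨by rwa [← Option.some_inj.1 he], h⟩, rfl⟩
            · rintro ⟨a', ⟨_, hs⟩, he⟩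
              rwa [← Option.some_inj.1 he]
        rcases Finset.eq_empty_or_nonempty S₀ with hS₀e | hS₀ne
        · rw [hSeq, hS₀e]
          simp only [Finset.image_empty, Finset.sum_empty]
          exact Finset.sum_nonneg (fun o _ => hf₂0 o)
        · -- main case
          set P := G.filter (fun b => ∃ a ∈ S₀, (a, b) ∈ R) with hP
          -- ENNReal chain
          have hchain : setSum μ₁ ↑S₀ ≤ tG + setSum μ₂ ↑P := by
            refine (hst ↑S₀).trans ?_
            have hsub : relImage R ↑S₀ ⊆ (↑G)ᶜ ∪ ↑P := by
              intro b hb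
              by_cases hbG : b ∈ G
              · right
                obtain ⟨a, ha, hr⟩ := hb
                exact Finset.mem_coe.2 (Finset.mem_filter.2 ⟨hbG, a, Finset.mem_coe.1 ha, hr⟩)
              · left; exact hbG
            refine (setSum_mono μ₂ hsub).trans ?_
            exact setSum_union_le μ₂ _ _
          -- LHS
          have hLHS : ∑ o ∈ S, f₁ o = (setSum μ₁ ↑S₀).toReal := by
            rw [hSeq, Finset.sum_image (by simp), setSum_finset]
            have e : ∑ a ∈ S₀, f₁ (some a) = ∑ a ∈ S₀, (μ₁ a).toReal :=
              Finset.sum_congr rfl (fun a ha => by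
                show (if a ∈ F then _ else 0) = _
                rw [if_pos (Finset.mem_filter.1 ha).1])
            rw [e, ← ENNReal.toReal_sum (fun a _ => hμ₁top a)]
          -- RHS lower bound
          have hsubRHS : insert none (P.image some) ⊆ rimg R' G' S := by
            intro o ho
            rw [Finset.mem_insert] at ho
            obtain ⟨a₀, ha₀⟩ := hS₀ne
            have ha₀S : some a₀ ∈ S := (Finset.mem_filter.1 ha₀).2
            rcases ho with h | h
            · subst h
              refine Finset.mem_filter.2 ⟨Finset.mem_insert_self _ _, some a₀, ha₀S, ?_⟩
              rw [hR']; rintro a c ⟨⟩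
            · obtain ⟨b, hb, he⟩ := Finset.mem_image.1 h
              subst he
              obtain ⟨hbG, a, haS₀, hr⟩ := Finset.mem_filter.1 hb
              refine Finset.mem_filter.2 ⟨?_, some a, (Finset.mem_filter.1 haS₀).2, ?_⟩
              · rw [hG']; exact Finset.mem_insert_of_mem (Finset.mem_image_of_mem some hbG)
              · rw [hR']
                rintro a' b' ⟨rfl, rfl⟩
                exact hr
          have hRHS : tG.toReal + (setSum μ₂ ↑P).toReal ≤ ∑ o ∈ rimg R' G' S, f₂ o := by
            refine le_trans ?_ (Finset.sum_le_sum_of_subset_of_nonneg hsubRHS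
              (fun o _ _ => hf₂0 o))
            rw [Finset.sum_insert (by simp), Finset.sum_image (by simp)]
            have e : ∑ b ∈ P, f₂ (some b) = (setSum μ₂ ↑P).toReal := by
              rw [setSum_finset]
              have e2 : ∑ b ∈ P, f₂ (some b) = ∑ b ∈ P, (μ₂ b).toReal :=
                Finset.sum_congr rfl (fun b hb => by
                  show (if b ∈ G then _ else 0) = _
                  rw [if_pos (Finset.mem_filter.1 hb).1])
              rw [e2, ← ENNReal.toReal_sum (fun b _ => hμ₂top b)]
            rw [e]
          refine le_trans ?_ hRHS
          rw [hLHS]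
          have hPtop : setSum μ₂ ↑P ≠ ⊤ := by
            rw [setSum_finset]; exact hsumGtop P
          calc (setSum μ₁ ↑S₀).toReal ≤ (tG + setSum μ₂ ↑P).toReal :=
                ENNReal.toReal_mono (ENNReal.add_ne_top.2 ⟨htGtop, hPtop⟩) hchain
            _ = tG.toReal + (setSum μ₂ ↑P).toReal := ENNReal.toReal_add htGtop hPtop)
    le_rfl
  -- build ν
  refine ⟨fun p => ENNReal.ofReal (μ' (some p.1, some p.2)), ?_, ?_, ?_, ?_⟩
  · intro p hp
    by_cases h : μ' (some p.1, some p.2) = 0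
    · show ENNReal.ofReal (μ' (some p.1, some p.2)) = 0
      rw [h]; exact ENNReal.ofReal_zero
    · obtain ⟨hr, _, _⟩ := hsupp' _ h
      rw [hR'] at hr
      exact absurd (hr p.1 p.2 rfl) hp
  · intro a
    have hz : ∀ b, b ∉ G → ENNReal.ofReal (μ' (some a, some b)) = 0 := by
      intro b hb
      by_cases h : μ' (some a, some b) = 0
      · rw [h]; exact ENNReal.ofReal_zero
      · obtain ⟨_, _, hbG'⟩ := hsupp' _ h
        rw [hG', Finset.mem_insert] at hbG'
        rcases hbG' with h' | h'
        · exact absurd h' (by simp)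
        · obtain ⟨b', hb', he⟩ := Finset.mem_image.1 h'
          exact absurd (by rwa [Option.some_inj.1 he] at hb') hb
    rw [tsum_eq_sum (s := G) hz, ← ENNReal.ofReal_sum_of_nonneg (fun b _ => h0' _)]
    have hle : ∑ b ∈ G, μ' (some a, some b) ≤ f₁ (some a) := by
      rw [← hrow' (some a), ← Finset.sum_image (f := fun o => μ' (some a, o)) (g := some)
        (by simp)]
      exact Finset.sum_le_sum_of_subset_of_nonneg
        (by rw [hG']; exact Finset.subset_insert _ _) (fun o _ _ => h0' _)
    refine le_trans (ENNReal.ofReal_le_ofReal hle) ?_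
    show ENNReal.ofReal (if a ∈ F then (μ₁ a).toReal else 0) ≤ μ₁ a
    split_ifs
    · rw [ENNReal.ofReal_toReal (hμ₁top a)]
    · simp
  · intro b
    have hz : ∀ a, a ∉ F → ENNReal.ofReal (μ' (some a, some b)) = 0 := by
      intro a ha
      by_cases h : μ' (some a, some b) = 0
      · rw [h]; exact ENNReal.ofReal_zero
      · obtain ⟨_, haF', _⟩ := hsupp' _ h
        rw [hF', Finset.mem_insert] at haF'
        rcases haF' with h' | h'
        · exact absurd h' (by simp)
        · obtain ⟨a', ha', he⟩ := Finset.mem_image.1 h'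
          exact absurd (by rwa [Option.some_inj.1 he] at ha') ha
    rw [tsum_eq_sum (s := F) hz, ← ENNReal.ofReal_sum_of_nonneg (fun a _ => h0' _)]
    have hle : ∑ a ∈ F, μ' (some a, some b) ≤ f₂ (some b) := by
      rw [← hcol' (some b), ← Finset.sum_image (f := fun o => μ' (o, some b)) (g := some)
        (by simp)]
      exact Finset.sum_le_sum_of_subset_of_nonneg
        (by rw [hF']; exact Finset.subset_insert _ _) (fun o _ _ => h0' _)
    refine le_trans (ENNReal.ofReal_le_ofReal hle) ?_
    show ENNReal.ofReal (if b ∈ G then (μ₂ b).toReal else 0) ≤ μ₂ b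
    split_ifs
    · rw [ENNReal.ofReal_toReal (hμ₂top b)]
    · simp
  · -- mass lower bound
    have hmass : W.toReal ≤ ∑ p ∈ F ×ˢ G, μ' (some p.1, some p.2) + tF.toReal + tG.toReal := by
      have htotal : ∑ p ∈ F' ×ˢ G', μ' p = W.toReal := by
        rw [Finset.sum_product]
        rw [Finset.sum_congr rfl (fun o _ => hrow' o)]
        exact hsumF'
      have hcover : ∀ p ∈ F' ×ˢ G', p ∈ (F.image some) ×ˢ (G.image some) ∨
          p ∈ ({none} : Finset (Option A₁)) ×ˢ G' ∨
          p ∈ F' ×ˢ ({none} : Finset (Option A₂)) := by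
        rintro ⟨o₁, o₂⟩ hp
        rw [Finset.mem_product] at hp
        match o₁, o₂ with
        | none, o₂ =>
          exact Or.inr (Or.inl (Finset.mem_product.2 ⟨Finset.mem_singleton_self _, hp.2⟩))
        | some a, none =>
          exact Or.inr (Or.inr (Finset.mem_product.2 ⟨hp.1, Finset.mem_singleton_self _⟩))
        | some a, some b =>
          have h1 : some a ∈ F.image some := by
            have := hp.1
            rw [hF', Finset.mem_insert] at this
            rcases this with h | h
            · exact absurd h (by simp)
            · exact h
          have h2 : some b ∈ G.image some := by
            have := hp.2
            rw [hG', Finset.mem_insert] at this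
            rcases this with h | h
            · exact absurd h (by simp)
            · exact h
          exact Or.inl (Finset.mem_product.2 ⟨h1, h2⟩)
      have hrownone : ∑ p ∈ ({none} : Finset (Option A₁)) ×ˢ G', μ' p = tF.toReal := by
        rw [Finset.sum_product, Finset.sum_singleton, hrow' none]
      have hcolnone : ∑ p ∈ F' ×ˢ ({none} : Finset (Option A₂)), μ' p = tG.toReal := by
        rw [Finset.sum_product_right, Finset.sum_singleton, hcol' none]
      have hbound := sum_le_three (F' ×ˢ G') ((F.image some) ×ˢ (G.image some))
        (({none} : Finset (Option A₁)) ×ˢ G') (F' ×ˢ ({none} : Finset (Option A₂)))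
        μ' h0' hcover
      rw [htotal, hrownone, hcolnone] at hbound
      have himg : ∑ p ∈ (F.image some) ×ˢ (G.image some), μ' p
          = ∑ p ∈ F ×ˢ G, μ' (some p.1, some p.2) := by
        rw [Finset.sum_product, Finset.sum_product,
          Finset.sum_image (f := fun o => ∑ o₂ ∈ G.image some, μ' (o, o₂)) (g := some)
            (by simp)]
        refine Finset.sum_congr rfl (fun a _ => ?_)
        rw [Finset.sum_image (by simp)]
      rw [himg] at hbound
      linarith
    -- lift to ENNReal
    show W ≤ ∑ p ∈ F ×ˢ G, ENNReal.ofReal (μ' (some p.1, some p.2)) + tF + tG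
    calc W = ENNReal.ofReal W.toReal := (ENNReal.ofReal_toReal hWtop).symm
      _ ≤ ENNReal.ofReal (∑ p ∈ F ×ˢ G, μ' (some p.1, some p.2) + tF.toReal + tG.toReal) :=
          ENNReal.ofReal_le_ofReal hmass
      _ ≤ ∑ p ∈ F ×ˢ G, ENNReal.ofReal (μ' (some p.1, some p.2)) + tF + tG := by
          rw [ENNReal.ofReal_add (add_nonneg (Finset.sum_nonneg fun p _ => h0' _)
              ENNReal.toReal_nonneg) ENNReal.toReal_nonneg,
            ENNReal.ofReal_add (Finset.sum_nonneg fun p _ => h0' _) ENNReal.toReal_nonneg,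
            ENNReal.ofReal_sum_of_nonneg (fun p _ => h0' _),
            ENNReal.ofReal_toReal htFtop, ENNReal.ofReal_toReal htGtop]

lemma setSum_union_disjoint {A : Type*} (μ : A → ℝ≥0∞) {S T : Set A} (h : Disjoint S T) :
    setSum μ (S ∪ T) = setSum μ S + setSum μ T := by
  rw [setSum, setSum, setSum, tsum_subtype, tsum_subtype, tsum_subtype, ← ENNReal.tsum_add]
  refine tsum_congr fun a => ?_
  by_cases hS : a ∈ S
  · have hT : a ∉ T := Set.disjoint_left.1 h hS
    rw [Set.indicator_of_mem (Set.mem_union_left _ hS), Set.indicator_of_mem hS,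
      Set.indicator_of_notMem hT, add_zero]
  · by_cases hT : a ∈ T
    · rw [Set.indicator_of_mem (Set.mem_union_right _ hT), Set.indicator_of_notMem hS,
        Set.indicator_of_mem hT, zero_add]
    · rw [Set.indicator_of_notMem (fun hc => ((Set.mem_union _ _ _).1 hc).elim hS hT),
        Set.indicator_of_notMem hS, Set.indicator_of_notMem hT, add_zero]

lemma tail_small {A : Type*} (f : A → ℝ≥0∞) (hf : ∑' a, f a ≠ ⊤) {ε : ℝ≥0∞} (hε : 0 < ε) :
    ∃ F : Finset A, setSum f (↑F)ᶜ < ε := by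
  have h := ENNReal.tendsto_tsum_compl_atTop_zero hf
  obtain ⟨F, hF⟩ := (h.eventually (Iio_mem_nhds hε)).exists
  refine ⟨F, ?_⟩
  have hset : ((↑F : Set A)ᶜ) = {x | x ∉ F} := by ext x; simp
  have : setSum f (↑F)ᶜ = ∑' (b : {x // x ∉ F}), f ↑b := by
    rw [setSum, hset]
    exact tsum_congr fun b => rfl
  rw [this]
  exact hF

lemma sum_le_three_ennreal {α : Type*} (Z E X Y : Finset α) (f : α → ℝ≥0∞)
    (hc : ∀ z ∈ Z, z ∈ E ∨ z ∈ X ∨ z ∈ Y) :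
    ∑ z ∈ Z, f z ≤ ∑ z ∈ E, f z + ∑ z ∈ X, f z + ∑ z ∈ Y, f z := by
  classical
  have h1 : Z ⊆ E ∪ X ∪ Y := by
    intro z hz
    rcases hc z hz with h | h | h
    · exact Finset.mem_union_left _ (Finset.mem_union_left _ h)
    · exact Finset.mem_union_left _ (Finset.mem_union_right _ h)
    · exact Finset.mem_union_right _ h
  have hu : ∀ (X' Y' : Finset α), ∑ z ∈ X' ∪ Y', f z ≤ ∑ z ∈ X', f z + ∑ z ∈ Y', f z := by
    intro X' Y'
    calc ∑ z ∈ X' ∪ Y', f z = ∑ z ∈ X', f z + ∑ z ∈ Y' \ X', f z := by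
          rw [← Finset.sum_union Finset.disjoint_sdiff, Finset.union_sdiff_self_eq_union]
      _ ≤ ∑ z ∈ X', f z + ∑ z ∈ Y', f z :=
          add_le_add le_rfl (Finset.sum_le_sum_of_subset Finset.sdiff_subset)
  calc ∑ z ∈ Z, f z ≤ ∑ z ∈ E ∪ X ∪ Y, f z := Finset.sum_le_sum_of_subset h1
    _ ≤ ∑ z ∈ E ∪ X, f z + ∑ z ∈ Y, f z := hu _ _
    _ ≤ (∑ z ∈ E, f z + ∑ z ∈ X, f z) + ∑ z ∈ Y, f z := add_le_add (hu _ _) le_rfl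

lemma exists_coupling (μ₁ : A₁ → ℝ≥0∞) (μ₂ : A₂ → ℝ≥0∞) (R : Set (A₁ × A₂))
    (h₁ : ∑' a, μ₁ a ≤ 1) (hw : ∑' a, μ₁ a = ∑' b, μ₂ b)
    (hst : ∀ S : Set A₁, setSum μ₁ S ≤ setSum μ₂ (relImage R S)) :
    ∃ μ : A₁ × A₂ → ℝ≥0∞, (∀ a, ∑' b, μ (a, b) = μ₁ a) ∧ (∀ b, ∑' a, μ (a, b) = μ₂ b) ∧
      (∀ p, μ p ≠ 0 → p ∈ R) := by
  classical
  set W := ∑' a, μ₁ a with hWdef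
  have hWtop : W ≠ ⊤ := ne_top_of_le_ne_top ENNReal.one_ne_top h₁
  have hW2top : (∑' b, μ₂ b) ≠ ⊤ := by rw [← hw]; exact hWtop
  set K : Set (A₁ × A₂ → ℝ≥0∞) :=
    {μ | (∀ p, p ∉ R → μ p = 0) ∧ (∀ a, ∑' b, μ (a, b) ≤ μ₁ a) ∧
      (∀ b, ∑' a, μ (a, b) ≤ μ₂ b)} with hKdef
  have hKclosed : IsClosed K := by
    have hA : IsClosed {μ : A₁ × A₂ → ℝ≥0∞ | ∀ p, p ∉ R → μ p = 0} := by
      have he : {μ : A₁ × A₂ → ℝ≥0∞ | ∀ p, p ∉ R → μ p = 0}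
          = ⋂ (p) (_ : p ∉ R), {μ : A₁ × A₂ → ℝ≥0∞ | μ p = 0} := by
        ext μ; simp
      rw [he]
      exact isClosed_iInter fun p => isClosed_iInter fun _ =>
        isClosed_eq (continuous_apply p) continuous_const
    have hB : IsClosed {μ : A₁ × A₂ → ℝ≥0∞ | ∀ a, ∑' b, μ (a, b) ≤ μ₁ a} := by
      have he : {μ : A₁ × A₂ → ℝ≥0∞ | ∀ a, ∑' b, μ (a, b) ≤ μ₁ a}
          = ⋂ (a) (s : Finset A₂), {μ : A₁ × A₂ → ℝ≥0∞ | ∑ b ∈ s, μ (a, b) ≤ μ₁ a} := by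
        ext μ
        simp only [Set.mem_setOf_eq, Set.mem_iInter]
        constructor
        · exact fun h a s => le_trans (ENNReal.sum_le_tsum s) (h a)
        · intro h a
          rw [ENNReal.tsum_eq_iSup_sum]
          exact iSup_le (h a)
      rw [he]
      exact isClosed_iInter fun a => isClosed_iInter fun s =>
        isClosed_le (continuous_finset_sum s fun b _ => continuous_apply (a, b))
          continuous_const
    have hC : IsClosed {μ : A₁ × A₂ → ℝ≥0∞ | ∀ b, ∑' a, μ (a, b) ≤ μ₂ b} := by
      have he : {μ : A₁ × A₂ → ℝ≥0∞ | ∀ b, ∑' a, μ (a, b) ≤ μ₂ b}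
          = ⋂ (b) (s : Finset A₁), {μ : A₁ × A₂ → ℝ≥0∞ | ∑ a ∈ s, μ (a, b) ≤ μ₂ b} := by
        ext μ
        simp only [Set.mem_setOf_eq, Set.mem_iInter]
        constructor
        · exact fun h b s => le_trans (ENNReal.sum_le_tsum s) (h b)
        · intro h b
          rw [ENNReal.tsum_eq_iSup_sum]
          exact iSup_le (h b)
      rw [he]
      exact isClosed_iInter fun b => isClosed_iInter fun s =>
        isClosed_le (continuous_finset_sum s fun a _ => continuous_apply (a, b))
          continuous_const
    have he : K = {μ : A₁ × A₂ → ℝ≥0∞ | ∀ p, p ∉ R → μ p = 0}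
        ∩ ({μ : A₁ × A₂ → ℝ≥0∞ | ∀ a, ∑' b, μ (a, b) ≤ μ₁ a}
          ∩ {μ : A₁ × A₂ → ℝ≥0∞ | ∀ b, ∑' a, μ (a, b) ≤ μ₂ b}) := rfl
    rw [he]
    exact hA.inter (hB.inter hC)
  set Z : Finset A₁ × Finset A₂ → Set (A₁ × A₂ → ℝ≥0∞) := fun FG =>
    K ∩ {μ | W ≤ ∑ p ∈ FG.1 ×ˢ FG.2, μ p + setSum μ₁ (↑FG.1)ᶜ + setSum μ₂ (↑FG.2)ᶜ}
    with hZdef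
  have hZclosed : ∀ i, IsClosed (Z i) := by
    intro i
    refine hKclosed.inter ?_
    exact isClosed_le continuous_const
      (((continuous_finset_sum _ fun p _ => continuous_apply p).add
        continuous_const).add continuous_const)
  have hZne : ∀ i, (Z i).Nonempty := by
    rintro ⟨F, G⟩
    obtain ⟨ν, hs, hr, hc, hm⟩ := approx_coupling μ₁ μ₂ R h₁ hw hst F G
    exact ⟨ν, ⟨hs, hr, hc⟩, hm⟩
  have hmono : ∀ (F F' : Finset A₁) (G G' : Finset A₂), F ⊆ F' → G ⊆ G' →
      Z (F', G') ⊆ Z (F, G) := by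
    rintro F F' G G' hF hG μ ⟨hKμ, hb⟩
    refine ⟨hKμ, ?_⟩
    simp only [Set.mem_setOf_eq] at hb ⊢
    have e1 : setSum μ₁ (↑F)ᶜ = setSum μ₁ (↑F')ᶜ + ∑ a ∈ F' \ F, μ₁ a := by
      have hset : ((↑F : Set A₁)ᶜ) = ((↑F' : Set A₁)ᶜ) ∪ ↑(F' \ F) := by
        ext a
        simp only [Set.mem_compl_iff, Finset.mem_coe, Set.mem_union, Finset.mem_sdiff]
        constructor
        · intro h
          by_cases h' : a ∈ F'
          · exact Or.inr ⟨h', h⟩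
          · exact Or.inl h'
        · rintro (h | h)
          · exact fun hc => h (hF hc)
          · exact h.2
      have hdis : Disjoint ((↑F' : Set A₁)ᶜ) ↑(F' \ F) := by
        rw [Set.disjoint_left]
        intro a ha hc
        exact ha (Finset.mem_coe.2 (Finset.mem_sdiff.1 (Finset.mem_coe.1 hc)).1)
      rw [hset, setSum_union_disjoint μ₁ hdis, setSum_finset]
    have e2 : setSum μ₂ (↑G)ᶜ = setSum μ₂ (↑G')ᶜ + ∑ b ∈ G' \ G, μ₂ b := by
      have hset : ((↑G : Set A₂)ᶜ) = ((↑G' : Set A₂)ᶜ) ∪ ↑(G' \ G) := by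
        ext b
        simp only [Set.mem_compl_iff, Finset.mem_coe, Set.mem_union, Finset.mem_sdiff]
        constructor
        · intro h
          by_cases h' : b ∈ G'
          · exact Or.inr ⟨h', h⟩
          · exact Or.inl h'
        · rintro (h | h)
          · exact fun hc => h (hG hc)
          · exact h.2
      have hdis : Disjoint ((↑G' : Set A₂)ᶜ) ↑(G' \ G) := by
        rw [Set.disjoint_left]
        intro b hb hc
        exact hb (Finset.mem_coe.2 (Finset.mem_sdiff.1 (Finset.mem_coe.1 hc)).1)
      rw [hset, setSum_union_disjoint μ₂ hdis, setSum_finset]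
    have hcov : ∀ p ∈ F' ×ˢ G', p ∈ F ×ˢ G ∨ p ∈ (F' \ F) ×ˢ G' ∨ p ∈ F' ×ˢ (G' \ G) := by
      rintro ⟨a, b⟩ hp
      rw [Finset.mem_product] at hp
      by_cases ha : a ∈ F
      · by_cases hb' : b ∈ G
        · exact Or.inl (Finset.mem_product.2 ⟨ha, hb'⟩)
        · exact Or.inr (Or.inr (Finset.mem_product.2 ⟨hp.1, Finset.mem_sdiff.2 ⟨hp.2, hb'⟩⟩))
      · exact Or.inr (Or.inl (Finset.mem_product.2 ⟨Finset.mem_sdiff.2 ⟨hp.1, ha⟩, hp.2⟩))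
    have h3 : ∑ p ∈ (F' \ F) ×ˢ G', μ p ≤ ∑ a ∈ F' \ F, μ₁ a := by
      rw [Finset.sum_product]
      exact Finset.sum_le_sum fun a _ =>
        le_trans (ENNReal.sum_le_tsum G') (hKμ.2.1 a)
    have h4 : ∑ p ∈ F' ×ˢ (G' \ G), μ p ≤ ∑ b ∈ G' \ G, μ₂ b := by
      rw [Finset.sum_product_right]
      exact Finset.sum_le_sum fun b _ =>
        le_trans (ENNReal.sum_le_tsum F') (hKμ.2.2 b)
    calc W ≤ ∑ p ∈ F' ×ˢ G', μ p + setSum μ₁ (↑F')ᶜ + setSum μ₂ (↑G')ᶜ := hb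
      _ ≤ (∑ p ∈ F ×ˢ G, μ p + ∑ p ∈ (F' \ F) ×ˢ G', μ p + ∑ p ∈ F' ×ˢ (G' \ G), μ p)
          + setSum μ₁ (↑F')ᶜ + setSum μ₂ (↑G')ᶜ := by
          gcongr
          exact sum_le_three_ennreal _ _ _ _ μ hcov
      _ ≤ (∑ p ∈ F ×ˢ G, μ p + ∑ a ∈ F' \ F, μ₁ a + ∑ b ∈ G' \ G, μ₂ b)
          + setSum μ₁ (↑F')ᶜ + setSum μ₂ (↑G')ᶜ := by
          gcongr
      _ = ∑ p ∈ F ×ˢ G, μ p + (setSum μ₁ (↑F')ᶜ + ∑ a ∈ F' \ F, μ₁ a)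
          + (setSum μ₂ (↑G')ᶜ + ∑ b ∈ G' \ G, μ₂ b) := by ring
      _ = ∑ p ∈ F ×ˢ G, μ p + setSum μ₁ (↑F)ᶜ + setSum μ₂ (↑G)ᶜ := by rw [← e1, ← e2]
  have hdir : Directed (· ⊇ ·) Z := by
    intro i j
    refine ⟨(i.1 ∪ j.1, i.2 ∪ j.2), ?_, ?_⟩
    · exact hmono i.1 _ i.2 _ Finset.subset_union_left Finset.subset_union_left
    · exact hmono j.1 _ j.2 _ Finset.subset_union_right Finset.subset_union_right
  obtain ⟨μ, hμ⟩ := IsCompact.nonempty_iInter_of_directed_nonempty_isCompact_isClosed Z hdir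
    hZne (fun i => (hZclosed i).isCompact) hZclosed
  rw [Set.mem_iInter] at hμ
  have hKμ : μ ∈ K := (hμ (∅, ∅)).1
  have hWle : ∀ (F : Finset A₁) (G : Finset A₂),
      W ≤ ∑ p ∈ F ×ˢ G, μ p + setSum μ₁ (↑F)ᶜ + setSum μ₂ (↑G)ᶜ := fun F G => (hμ (F, G)).2
  have hconv : ∑' p : A₁ × A₂, μ p = ∑' a, ∑' b, μ (a, b) := by
    rw [← ENNReal.tsum_prod]
  have hmassle : ∑' p, μ p ≤ W := by
    rw [hconv, hWdef]
    exact ENNReal.tsum_le_tsum fun a => hKμ.2.1 a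
  have hmassge : W ≤ ∑' p, μ p := by
    refine ENNReal.le_of_forall_pos_le_add fun ε hε hlt => ?_
    have hε2 : (0 : ℝ≥0∞) < (ε : ℝ≥0∞) / 2 :=
      ENNReal.div_pos (by exact_mod_cast hε.ne') ENNReal.ofNat_ne_top
    obtain ⟨F, hF⟩ := tail_small μ₁ hWtop hε2
    obtain ⟨G, hG⟩ := tail_small μ₂ hW2top hε2
    calc W ≤ ∑ p ∈ F ×ˢ G, μ p + setSum μ₁ (↑F)ᶜ + setSum μ₂ (↑G)ᶜ := hWle F G
      _ ≤ ∑' p, μ p + (ε : ℝ≥0∞) / 2 + (ε : ℝ≥0∞) / 2 :=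
          add_le_add (add_le_add (ENNReal.sum_le_tsum _) hF.le) hG.le
      _ = ∑' p, μ p + (ε : ℝ≥0∞) := by rw [add_assoc, ENNReal.add_halves]
  have hmass : ∑' p, μ p = W := le_antisymm hmassle hmassge
  have hrow : ∀ a, ∑' b, μ (a, b) = μ₁ a := by
    by_contra h
    push_neg at h
    obtain ⟨a₀, ha₀⟩ := h
    have hlt : ∑' b, μ (a₀, b) < μ₁ a₀ := lt_of_le_of_ne (hKμ.2.1 a₀) ha₀
    have hlt2 : ∑' a, ∑' b, μ (a, b) < ∑' a, μ₁ a :=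
      ENNReal.tsum_lt_tsum (by rw [← hconv, hmass]; exact hWtop)
        (fun a => hKμ.2.1 a) hlt
    rw [← hconv, hmass, ← hWdef] at hlt2
    exact lt_irrefl _ hlt2
  have hcol : ∀ b, ∑' a, μ (a, b) = μ₂ b := by
    by_contra h
    push_neg at h
    obtain ⟨b₀, hb₀⟩ := h
    have hlt : ∑' a, μ (a, b₀) < μ₂ b₀ := lt_of_le_of_ne (hKμ.2.2 b₀) hb₀
    have hlt2 : ∑' b, ∑' a, μ (a, b) < ∑' b, μ₂ b :=
      ENNReal.tsum_lt_tsum (by rw [← ENNReal.tsum_comm, ← hconv, hmass, hw]; exact hW2top)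
        (fun b => hKμ.2.2 b) hlt
    rw [← ENNReal.tsum_comm, ← hconv, hmass, hw] at hlt2
    exact lt_irrefl _ hlt2
  refine ⟨μ, hrow, hcol, fun p hp => ?_⟩
  by_contra h
  exact hp (hKμ.1 p h)

end StrassenAux

theorem discrete_strassen {A₁ A₂ : Type*} [Countable A₁] [Countable A₂]
    (μ₁ : A₁ → ℝ≥0∞) (μ₂ : A₂ → ℝ≥0∞) (R : Set (A₁ × A₂))
    (h₁ : IsSubDist μ₁) (h₂ : IsSubDist μ₂) :
    ((∃ μ : A₁ × A₂ → ℝ≥0∞, IsCoupling μ μ₁ μ₂ ∧ {p | μ p ≠ 0} ⊆ R) →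
      ∀ S : Set A₁, setSum μ₁ S ≤ setSum μ₂ (relImage R S)) ∧
    ((∑' a, μ₁ a = ∑' a, μ₂ a) →
      (∀ S : Set A₁, setSum μ₁ S ≤ setSum μ₂ (relImage R S)) →
      ∃ μ : A₁ × A₂ → ℝ≥0∞, IsCoupling μ μ₁ μ₂ ∧ {p | μ p ≠ 0} ⊆ R) := by
  constructor
  · rintro ⟨μ, ⟨hsub, hrow, hcol⟩, hsupp⟩ S
    have key : ∀ b, ∑' a : S, μ ((a : A₁), b) ≤ Set.indicator (relImage R S) μ₂ b := by
      intro b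
      by_cases hb : b ∈ relImage R S
      · rw [Set.indicator_of_mem hb]
        calc ∑' a : S, μ ((a : A₁), b)
            = ∑' a, Set.indicator S (fun a => μ (a, b)) a := tsum_subtype S (fun a => μ (a, b))
          _ ≤ ∑' a, μ (a, b) :=
              ENNReal.tsum_le_tsum fun a => Set.indicator_le_self _ _ a
          _ = μ₂ b := hcol b
      · rw [Set.indicator_of_notMem hb]
        have hz : ∀ a : S, μ ((a : A₁), b) = 0 := by
          intro a
          by_contra h
          exact hb ⟨(a : A₁), a.2, hsupp (show ((a : A₁), b) ∈ {p | μ p ≠ 0} from h)⟩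
        rw [tsum_congr hz]
        simp
    calc setSum μ₁ S = ∑' a : S, μ₁ (a : A₁) := rfl
      _ = ∑' a : S, ∑' b, μ ((a : A₁), b) := tsum_congr fun a => (hrow (a : A₁)).symm
      _ = ∑' b, ∑' a : S, μ ((a : A₁), b) := ENNReal.tsum_comm
      _ ≤ ∑' b, Set.indicator (relImage R S) μ₂ b := ENNReal.tsum_le_tsum key
      _ = setSum μ₂ (relImage R S) := (tsum_subtype _ _).symm
  · intro hweq hst
    obtain ⟨μ, hrow, hcol, hsupp⟩ := StrassenAux.exists_coupling μ₁ μ₂ R h₁ hweq hst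
    refine ⟨μ, ⟨?_, hrow, hcol⟩, fun p hp => hsupp p hp⟩
    rw [IsSubDist]
    calc ∑' p, μ p = ∑' a, ∑' b, μ (a, b) := by rw [← ENNReal.tsum_prod]
      _ = ∑' a, μ₁ a := tsum_congr hrow
      _ ≤ 1 := h₁
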